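/- Let (H, ω) be a symplectic Banach space with splitting H = H⁺ ⊕ H⁻ as above, λ an isotropic subspace with generating operator U : dom U ⊆ H⁺ → H⁻, and μ a Lagrangian subspace whose generating operator V : H⁺ → H⁻ is bounded and invertible. Then (λ, μ) is a Fredholm pair if and only if UV⁻¹ − I_{H⁻} is a Fredholm operator, and in that case index(λ, μ) = index(UV⁻¹ − I_{H⁻}). Moreover ker(UV⁻¹ − I_{H⁻}) ≅ λ ∩ μ. -/

import Mathlib

set_option maxHeartbeats 1000000


/-- Fredholm pair of closed subspaces of a normed space. -/
def FredholmPair {V : Type*} [NormedAddCommGroup V] [Module ℂ V]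
    (p q : Submodule ℂ V) : Prop :=
  FiniteDimensional ℂ ↥(p ⊓ q) ∧ IsClosed (p : Set V) ∧ IsClosed (q : Set V) ∧
    IsClosed ((p ⊔ q : Submodule ℂ V) : Set V) ∧ FiniteDimensional ℂ (V ⧸ (p ⊔ q))

/-- Index of a Fredholm pair. -/
noncomputable def indexPair {V : Type*} [NormedAddCommGroup V] [Module ℂ V]
    (p q : Submodule ℂ V) : ℤ :=
  (Module.finrank ℂ ↥(p ⊓ q) : ℤ) - (Module.finrank ℂ (V ⧸ (p ⊔ q)) : ℤ)

/-- Characterization of Fredholm pairs via generating operators: if `λ = Graph U`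
is isotropic and `μ = Graph V` is Lagrangian with `V : H⁺ → H⁻` bounded and
invertible, then `(λ, μ)` is a Fredholm pair iff `T = UV⁻¹ - I` (a closed, possibly
unbounded, operator on `H⁻`) is Fredholm; in that case the indices agree, and
`ker T ≅ λ ∩ μ`. -/
theorem fredholm_pair_iff_generating_operator
    {H : Type*} [NormedAddCommGroup H] [NormedSpace ℂ H] [CompleteSpace H]
    (ω : H → H → ℂ)
    (hadd : ∀ x y z : H, ω (x + y) z = ω x z + ω y z)
    (hsmul : ∀ (c : ℂ) (x y : H), ω (c • x) y = c * ω x y)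
    (hskew : ∀ x y : H, ω x y = -(starRingEnd ℂ) (ω y x))
    (C : ℝ) (hbound : ∀ x y : H, ‖ω x y‖ ≤ C * ‖x‖ * ‖y‖)
    (hnondeg : ∀ x : H, (∀ y : H, ω x y = 0) → x = 0)
    (Hp Hm : Submodule ℂ H)
    (hsplit_sup : Hp ⊔ Hm = ⊤) (hsplit_inf : Hp ⊓ Hm = ⊥)
    (hpos : ∀ x ∈ Hp, x ≠ 0 → 0 < (-(Complex.I) * ω x x).re)
    (hneg : ∀ x ∈ Hm, x ≠ 0 → (-(Complex.I) * ω x x).re < 0)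
    (horth : ∀ x ∈ Hp, ∀ y ∈ Hm, ω x y = 0)
    -- the generating operator U of the isotropic subspace λ:
    (D : Submodule ℂ H) (hD : D ≤ Hp)
    (U : ↥D →ₗ[ℂ] H) (hU : ∀ d : ↥D, U d ∈ Hm)
    (lam : Submodule ℂ H)
    (hlam_graph : (lam : Set H) = {z : H | ∃ d : ↥D, z = (d : H) + U d})
    (hlam_iso : ∀ x ∈ lam, ∀ y ∈ lam, ω x y = 0)
    -- the generating operator V of the Lagrangian subspace μ, bounded and invertible:
    (V : ↥Hp →ₗ[ℂ] H) (hV : ∀ x : ↥Hp, V x ∈ Hm)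
    (hVbdd : ∃ c : ℝ, ∀ x : ↥Hp, ‖V x‖ ≤ c * ‖(x : H)‖)
    (hVinvbdd : ∃ c' : ℝ, ∀ x : ↥Hp, ‖(x : H)‖ ≤ c' * ‖V x‖)
    (Vinv : ↥Hm →ₗ[ℂ] H) (hVinv : ∀ y : ↥Hm, Vinv y ∈ Hp)
    (hVleft : ∀ (x : ↥Hp) (hx : V x ∈ Hm), Vinv ⟨V x, hx⟩ = (x : H))
    (hVright : ∀ (y : ↥Hm) (hy : Vinv y ∈ Hp), V ⟨Vinv y, hy⟩ = (y : H))
    (mu : Submodule ℂ H)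
    (hmu_graph : (mu : Set H) = {z : H | ∃ x : ↥Hp, z = (x : H) + V x})
    (hmu_lag : {y : H | ∀ x ∈ (mu : Set H), ω x y = 0} = (mu : Set H))
    -- the operator T = U V⁻¹ - I with domain V(dom U) ⊆ H⁻, valued in H⁻:
    (T : ↥((D.comap Vinv).map Hm.subtype) →ₗ[ℂ] ↥Hm)
    (hT : ∀ (y : ↥Hm) (hd : Vinv y ∈ D)
        (hmem : (y : H) ∈ (D.comap Vinv).map Hm.subtype),
        ((T ⟨(y : H), hmem⟩ : H)) = U ⟨Vinv y, hd⟩ - (y : H)) :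
    (FredholmPair lam mu ↔
      (IsClosed {p : H × H | ∃ y : ↥((D.comap Vinv).map Hm.subtype),
          p.1 = (y : H) ∧ p.2 = ((T y : ↥Hm) : H)} ∧
       FiniteDimensional ℂ ↥(LinearMap.ker T) ∧
       IsClosed ((LinearMap.range T : Submodule ℂ ↥Hm) : Set ↥Hm) ∧
       FiniteDimensional ℂ (↥Hm ⧸ LinearMap.range T))) ∧
    (FredholmPair lam mu →
      indexPair lam mu = (Module.finrank ℂ ↥(LinearMap.ker T) : ℤ)
        - (Module.finrank ℂ (↥Hm ⧸ LinearMap.range T) : ℤ)) ∧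
    Nonempty (↥(LinearMap.ker T) ≃ₗ[ℂ] ↥(lam ⊓ mu)) := by
  classical
  have hcompl : IsCompl Hp Hm := IsCompl.of_eq hsplit_inf hsplit_sup
  -- continuity in first slot
  have hcont : ∀ y : H, Continuous fun z => ω z y := by
    intro y
    have : Continuous fun z : H => (LinearMap.mkContinuous
        (⟨⟨fun z => ω z y, fun a b => hadd a b y⟩, fun c a => hsmul c a y⟩ : H →ₗ[ℂ] ℂ)
        (C * ‖y‖) (fun x => by
          calc ‖ω x y‖ ≤ C * ‖x‖ * ‖y‖ := hbound x y
          _ = C * ‖y‖ * ‖x‖ := by ring)) z :=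
      (LinearMap.mkContinuous _ _ _).continuous
    exact this
  -- additivity in second slot
  have hadd2 : ∀ x y z : H, ω x (y + z) = ω x y + ω x z := by
    intro x y z
    rw [hskew x (y + z), hadd, map_add, hskew x y, hskew x z]; ring
  have hdecomp : ∀ z : H, ∃ a ∈ Hp, ∃ b ∈ Hm, z = a + b := by
    intro z
    have hz : z ∈ Hp ⊔ Hm := by rw [hsplit_sup]; trivial
    obtain ⟨a, ha, b, hb, hab⟩ := Submodule.mem_sup.1 hz
    exact ⟨a, ha, b, hb, hab.symm⟩
  -- a key orthogonality consequence
  have horth' : ∀ y ∈ Hm, ∀ x ∈ Hp, ω y x = 0 := by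
    intro y hy x hx
    rw [hskew, horth x hx y hy]; simp
  have hHp_char : (Hp : Set H) = {z : H | ∀ y ∈ Hm, ω z y = 0} := by
    ext z
    simp only [Set.mem_setOf_eq, SetLike.mem_coe]
    constructor
    · intro hz y hy; exact horth z hz y hy
    · intro hz
      obtain ⟨a, ha, b, hb, rfl⟩ := hdecomp z
      have hb0 : b = 0 := by
        apply hnondeg
        intro y
        obtain ⟨p, hp, m, hm, rfl⟩ := hdecomp y
        have h1 : ω b p = 0 := horth' b hb p hp
        have h2 : ω b m = 0 := by
          have := hz m hm
          have ha' : ω a m = 0 := horth a ha m hm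
          have : ω a m + ω b m = 0 := by rw [← hadd]; exact this
          rw [ha'] at this; simpa using this
        rw [hadd2, h1, h2]; simp
      rw [hb0, add_zero]; exact ha
  have hHm_char : (Hm : Set H) = {z : H | ∀ y ∈ Hp, ω z y = 0} := by
    ext z
    simp only [Set.mem_setOf_eq, SetLike.mem_coe]
    constructor
    · intro hz y hy; exact horth' z hz y hy
    · intro hz
      obtain ⟨a, ha, b, hb, rfl⟩ := hdecomp z
      have ha0 : a = 0 := by
        apply hnondeg
        intro y
        obtain ⟨p, hp, m, hm, rfl⟩ := hdecomp y
        have h1 : ω a m = 0 := horth a ha m hm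
        have h2 : ω a p = 0 := by
          have := hz p hp
          have hb' : ω b p = 0 := horth' b hb p hp
          have : ω a p + ω b p = 0 := by rw [← hadd]; exact this
          rw [hb'] at this; simpa using this
        rw [hadd2, h1, h2]; simp
      rw [ha0, zero_add]; exact hb
  have hHp_closed : IsClosed (Hp : Set H) := by
    rw [hHp_char]
    have : {z : H | ∀ y ∈ Hm, ω z y = 0} = ⋂ y ∈ (Hm : Set H), {z : H | ω z y = 0} := by
      ext z; simp
    rw [this]
    exact isClosed_biInter fun y _ => isClosed_eq (hcont y) continuous_const
  have hHm_closed : IsClosed (Hm : Set H) := by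
    rw [hHm_char]
    have : {z : H | ∀ y ∈ Hp, ω z y = 0} = ⋂ y ∈ (Hp : Set H), {z : H | ω z y = 0} := by
      ext z; simp
    rw [this]
    exact isClosed_biInter fun y _ => isClosed_eq (hcont y) continuous_const
  set πp : H →ₗ[ℂ] ↥Hp := Hp.projectionOnto Hm hcompl with hπp_def
  set πm : H →ₗ[ℂ] ↥Hm := Hm.projectionOnto Hp hcompl.symm with hπm_def
  -- projection facts
  have hπ_add : ∀ (a : ↥Hp) (b : ↥Hm), πp ((a : H) + b) = a ∧ πm ((a : H) + b) = b := by
    intro a b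
    constructor
    · rw [hπp_def, map_add, Submodule.linearProjOfIsCompl_apply_left,
        Submodule.linearProjOfIsCompl_apply_right']
      · simp
      · exact b.2
    · rw [hπm_def, map_add, Submodule.linearProjOfIsCompl_apply_left,
        Submodule.linearProjOfIsCompl_apply_right']
      · simp
      · exact a.2
  have hrecon : ∀ z : H, (πp z : H) + (πm z : H) = z := by
    intro z
    exact Submodule.projection_add_projection_eq_self hcompl z
  -- domain facts
  have hmemHm : ∀ z ∈ ((D.comap Vinv).map Hm.subtype), z ∈ Hm := fun z hz => Submodule.map_subtype_le _ _ hz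
  have hmemD : ∀ (z : H) (hz : z ∈ ((D.comap Vinv).map Hm.subtype)) (hz' : z ∈ Hm), Vinv ⟨z, hz'⟩ ∈ D := by
    intro z hz hz'
    obtain ⟨y, hy, hyz⟩ := hz
    have : (⟨z, hz'⟩ : ↥Hm) = y := Subtype.ext hyz.symm
    rw [this]; exact hy
  have hdom_iff : ∀ (z : H) (hz' : z ∈ Hm), z ∈ ((D.comap Vinv).map Hm.subtype) ↔ Vinv ⟨z, hz'⟩ ∈ D := by
    intro z hz'
    constructor
    · intro hz; exact hmemD z hz hz'
    · intro hd; exact ⟨⟨z, hz'⟩, hd, rfl⟩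
  -- T value formula
  have hT' : ∀ (z : ↥((D.comap Vinv).map Hm.subtype)) (hz : (z : H) ∈ Hm) (hd : Vinv ⟨(z : H), hz⟩ ∈ D),
      (T z : H) = U ⟨Vinv ⟨(z : H), hz⟩, hd⟩ - (z : H) := by
    intro z hz hd
    have h1 := hT ⟨(z : H), hz⟩ hd z.2
    have h2 : (⟨(z : H), z.2⟩ : ↥((D.comap Vinv).map Hm.subtype)) = z := Subtype.ext rfl
    rw [h2] at h1
    simpa using h1
  -- membership characterizations
  have mem_lam : ∀ z : H, z ∈ lam ↔ ∃ d : ↥D, z = (d : H) + U d := by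
    intro z
    rw [← SetLike.mem_coe, hlam_graph]; rfl
  have mem_mu : ∀ z : H, z ∈ mu ↔ ∃ x : ↥Hp, z = (x : H) + V x := by
    intro z
    rw [← SetLike.mem_coe, hmu_graph]; rfl
  have mem_lam' : ∀ z : H, z ∈ lam ↔ ∃ d : ↥D, (πp z : H) = (d : H) ∧ (πm z : H) = U d := by
    intro z
    rw [mem_lam]
    constructor
    · rintro ⟨d, rfl⟩
      refine ⟨d, ?_, ?_⟩
      · have := (hπ_add ⟨(d : H), hD d.2⟩ ⟨U d, hU d⟩).1
        simp only at this
        rw [this]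
      · have := (hπ_add ⟨(d : H), hD d.2⟩ ⟨U d, hU d⟩).2
        simp only at this
        rw [this]
    · rintro ⟨d, h1, h2⟩
      exact ⟨d, by rw [← hrecon z, h1, h2]⟩
  have mem_mu' : ∀ z : H, z ∈ mu ↔ (πm z : H) = V (πp z) := by
    intro z
    rw [mem_mu]
    constructor
    · rintro ⟨x, rfl⟩
      have h1 := (hπ_add x ⟨V x, hV x⟩).1
      have h2 := (hπ_add x ⟨V x, hV x⟩).2
      rw [h1, h2]
    · intro h
      exact ⟨πp z, by conv_lhs => rw [← hrecon z, h]⟩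

  -- the inclusion dom T ⊆ Hm
  have hdomle : (D.comap Vinv).map Hm.subtype ≤ Hm := hmemHm
  set ι : ↥((D.comap Vinv).map Hm.subtype) →ₗ[ℂ] ↥Hm := Submodule.inclusion hdomle with hι_def
  have hιval : ∀ w : ↥((D.comap Vinv).map Hm.subtype), ((ι w : ↥Hm) : H) = (w : H) :=
    fun w => rfl
  set Φ : ↥Hm →ₗ[ℂ] H := Vinv + Hm.subtype with hΦ_def
  have hΦval : ∀ y : ↥Hm, Φ y = Vinv y + (y : H) := fun y => rfl
  set A0 : ↥(LinearMap.ker T) →ₗ[ℂ] H := Φ ∘ₗ ι ∘ₗ (LinearMap.ker T).subtype with hA0_def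
  have hA0val : ∀ k : ↥(LinearMap.ker T),
      A0 k = Vinv (ι (k : ↥((D.comap Vinv).map Hm.subtype))) + ((k : ↥((D.comap Vinv).map Hm.subtype)) : H) := by
    intro k; rfl
  -- value facts for A0
  have hA0fact : ∀ k : ↥(LinearMap.ker T),
      ∃ (hz : ((k : ↥((D.comap Vinv).map Hm.subtype)) : H) ∈ Hm)
        (hd : Vinv ⟨((k : ↥((D.comap Vinv).map Hm.subtype)) : H), hz⟩ ∈ D),
        A0 k = Vinv ⟨((k : ↥((D.comap Vinv).map Hm.subtype)) : H), hz⟩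
          + ((k : ↥((D.comap Vinv).map Hm.subtype)) : H)
        ∧ U ⟨Vinv ⟨((k : ↥((D.comap Vinv).map Hm.subtype)) : H), hz⟩, hd⟩
            = ((k : ↥((D.comap Vinv).map Hm.subtype)) : H) := by
    intro k
    set w : ↥((D.comap Vinv).map Hm.subtype) := (k : ↥((D.comap Vinv).map Hm.subtype)) with hw_def
    have hzHm : (w : H) ∈ Hm := hmemHm _ w.2
    have hzD : Vinv ⟨(w : H), hzHm⟩ ∈ D := hmemD _ w.2 hzHm
    refine ⟨hzHm, hzD, ?_, ?_⟩
    · rfl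
    · have hTw := hT' w hzHm hzD
      have hk0 : T w = 0 := k.2
      rw [hk0] at hTw
      have h0 : (0 : H) = U ⟨Vinv ⟨(w : H), hzHm⟩, hzD⟩ - (w : H) := by simpa using hTw
      exact sub_eq_zero.mp h0.symm
  have hA0mem : ∀ k : ↥(LinearMap.ker T), A0 k ∈ lam ⊓ mu := by
    intro k
    obtain ⟨hz, hd, hval, hU'⟩ := hA0fact k
    refine Submodule.mem_inf.2 ⟨?_, ?_⟩
    · rw [mem_lam]
      exact ⟨⟨Vinv ⟨_, hz⟩, hd⟩, by rw [hval, hU']⟩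
    · rw [mem_mu]
      refine ⟨⟨Vinv ⟨_, hz⟩, hVinv _⟩, ?_⟩
      rw [hval, hVright ⟨_, hz⟩ (hVinv _)]
  set A : ↥(LinearMap.ker T) →ₗ[ℂ] ↥(lam ⊓ mu) := LinearMap.codRestrict _ A0 hA0mem with hA_def
  -- the inverse map
  set B0 : ↥(lam ⊓ mu) →ₗ[ℂ] H := Hm.subtype ∘ₗ πm ∘ₗ (lam ⊓ mu).subtype with hB0_def
  have hB0val : ∀ z : ↥(lam ⊓ mu), B0 z = (πm (z : H) : H) := fun z => rfl
  -- facts about elements of lam ⊓ mu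
  have hlm_fact : ∀ z : ↥(lam ⊓ mu),
      (πm (z : H) : H) = V (πp (z : H)) ∧ ∃ d : ↥D, (πp (z : H) : H) = (d : H) ∧ (πm (z : H) : H) = U d := by
    intro z
    have h1 := (mem_mu' (z : H)).1 z.2.2
    have h2 := (mem_lam' (z : H)).1 z.2.1
    exact ⟨h1, h2⟩
  have hB0dom : ∀ z : ↥(lam ⊓ mu), B0 z ∈ (D.comap Vinv).map Hm.subtype := by
    intro z
    obtain ⟨h1, d, hd1, hd2⟩ := hlm_fact z
    rw [hB0val]
    refine ⟨πm (z : H), ?_, rfl⟩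
    show Vinv (πm (z : H)) ∈ D
    have : πm (z : H) = ⟨V (πp (z : H)), hV _⟩ := Subtype.ext h1
    rw [this, hVleft (πp (z : H)) (hV _)]
    rw [hd1]; exact d.2
  set B1 : ↥(lam ⊓ mu) →ₗ[ℂ] ↥((D.comap Vinv).map Hm.subtype) :=
    LinearMap.codRestrict _ B0 hB0dom with hB1_def
  have hB1val : ∀ z : ↥(lam ⊓ mu), ((B1 z : ↥((D.comap Vinv).map Hm.subtype)) : H) = (πm (z : H) : H) :=
    fun z => hB0val z
  have hB1ker : ∀ z : ↥(lam ⊓ mu), B1 z ∈ LinearMap.ker T := by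
    intro z
    obtain ⟨h1, d, hd1, hd2⟩ := hlm_fact z
    have hzHm : ((B1 z : ↥((D.comap Vinv).map Hm.subtype)) : H) ∈ Hm := hmemHm _ (B1 z).2
    have hzD : Vinv ⟨_, hzHm⟩ ∈ D := hmemD _ (B1 z).2 hzHm
    have hTv := hT' (B1 z) hzHm hzD
    have hVinvval : Vinv (⟨((B1 z : ↥((D.comap Vinv).map Hm.subtype)) : H), hzHm⟩ : ↥Hm) = (d : H) := by
      have he : (⟨((B1 z : ↥((D.comap Vinv).map Hm.subtype)) : H), hzHm⟩ : ↥Hm)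
          = ⟨V (πp (z : H)), hV _⟩ := Subtype.ext (by rw [hB1val]; exact h1)
      rw [he, hVleft (πp (z : H)) (hV _), hd1]
    show T (B1 z) = 0
    apply Subtype.ext
    rw [hTv]
    have hUd : U ⟨Vinv ⟨_, hzHm⟩, hzD⟩ = U d := by
      congr 1
      exact Subtype.ext hVinvval
    rw [hUd, hB1val, hd2]
    simp
  set B : ↥(lam ⊓ mu) →ₗ[ℂ] ↥(LinearMap.ker T) := LinearMap.codRestrict _ B1 hB1ker with hB_def
  -- the two compositions are the identity
  have hAB : A ∘ₗ B = LinearMap.id := by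
    apply LinearMap.ext
    intro z
    apply Subtype.ext
    show A0 (B z) = (z : H)
    obtain ⟨h1, d, hd1, hd2⟩ := hlm_fact z
    obtain ⟨hz, hd', hval, hU'⟩ := hA0fact (B z)
    rw [hval]
    have hcoe : ((((B z) : ↥((D.comap Vinv).map Hm.subtype))) : H) = (πm (z : H) : H) := hB1val z
    have hVv : Vinv ⟨_, hz⟩ = (πp (z : H) : H) := by
      have he : (⟨(((B z) : ↥((D.comap Vinv).map Hm.subtype)) : H), hz⟩ : ↥Hm)
          = ⟨V (πp (z : H)), hV _⟩ := Subtype.ext (by rw [hcoe]; exact h1)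
      rw [he, hVleft (πp (z : H)) (hV _)]
    rw [hVv, hcoe, hrecon]
  have hBA : B ∘ₗ A = LinearMap.id := by
    apply LinearMap.ext
    intro k
    apply Subtype.ext
    apply Subtype.ext
    show ((B1 (A k) : ↥((D.comap Vinv).map Hm.subtype)) : H) = ((k : ↥((D.comap Vinv).map Hm.subtype)) : H)
    rw [hB1val]
    obtain ⟨hz, hd, hval, hU'⟩ := hA0fact k
    have hAkval : ((A k : ↥(lam ⊓ mu)) : H) = A0 k := rfl
    rw [hAkval, hval]
    have := (hπ_add ⟨Vinv ⟨_, hz⟩, hVinv _⟩ ⟨_, hz⟩).2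
    simp only at this
    rw [this]
  have e1 : ↥(LinearMap.ker T) ≃ₗ[ℂ] ↥(lam ⊓ mu) := LinearEquiv.ofLinear A B hAB hBA

  -- continuous versions of the projections
  set πpc : H →L[ℂ] ↥Hp := Hp.linearProjOfClosedCompl Hm hcompl hHp_closed hHm_closed with hπpc_def
  set πmc : H →L[ℂ] ↥Hm := Hm.linearProjOfClosedCompl Hp hcompl.symm hHm_closed hHp_closed with hπmc_def
  have hπpc_coe : ⇑πpc = ⇑πp := by
    rw [hπpc_def, hπp_def]; exact Submodule.coe_continuous_linearProjOfClosedCompl' _ _ _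
  have hπmc_coe : ⇑πmc = ⇑πm := by
    rw [hπmc_def, hπm_def]; exact Submodule.coe_continuous_linearProjOfClosedCompl' _ _ _
  obtain ⟨c, hc⟩ := hVbdd
  obtain ⟨c', hc'⟩ := hVinvbdd
  have hVcont : Continuous fun x : ↥Hp => V x :=
    (LinearMap.mkContinuous V c (fun x => by simpa using hc x)).continuous
  have hVinvcont : Continuous fun y : ↥Hm => Vinv y := by
    refine (LinearMap.mkContinuous Vinv c' (fun y => ?_)).continuous
    have h1 := hc' ⟨Vinv y, hVinv y⟩
    rw [hVright y (hVinv y)] at h1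
    simpa using h1
  -- the "vertical projection along mu" map Q
  set Q : H →ₗ[ℂ] ↥Hm := πm - LinearMap.codRestrict Hm (V ∘ₗ πp) (fun z => hV _) with hQ_def
  have hQval : ∀ z : H, ((Q z : ↥Hm) : H) = (πm z : H) - V (πp z) := by
    intro z; rw [hQ_def]; simp
  have hQcont : Continuous fun z : H => Q z := by
    apply continuous_induced_rng.mpr
    have : (Subtype.val ∘ fun z : H => Q z) = fun z : H => (πm z : H) - V (πp z) := by
      funext z; exact hQval z
    rw [this]
    rw [← hπmc_coe, ← hπpc_coe]
    exact (continuous_subtype_val.comp πmc.continuous).sub (hVcont.comp πpc.continuous)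
  have hQHm : ∀ y : ↥Hm, Q ((y : H)) = y := by
    intro y
    apply Subtype.ext
    rw [hQval]
    rw [hπm_def, hπp_def, Submodule.linearProjOfIsCompl_apply_left hcompl.symm y,
      Submodule.linearProjOfIsCompl_apply_right' hcompl y.2, map_zero]
    simp
  have hQmu : ∀ z : H, Q z = 0 ↔ z ∈ mu := by
    intro z
    rw [mem_mu']
    constructor
    · intro h
      have := congrArg (Subtype.val) h
      rw [hQval] at this
      simpa [sub_eq_zero] using this
    · intro h
      apply Subtype.ext
      rw [hQval, h]
      simp
  -- the range of T
  have hTrange : ∀ y : ↥Hm, y ∈ LinearMap.range T ↔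
      ∃ d : ↥D, (y : H) = U d - V (Submodule.inclusion hD d) := by
    intro y
    constructor
    · rintro ⟨w, rfl⟩
      have hzHm : (w : H) ∈ Hm := hmemHm _ w.2
      have hzD : Vinv ⟨(w : H), hzHm⟩ ∈ D := hmemD _ w.2 hzHm
      refine ⟨⟨Vinv ⟨(w : H), hzHm⟩, hzD⟩, ?_⟩
      rw [hT' w hzHm hzD]
      congr 1
      have h5 : V (Submodule.inclusion hD ⟨Vinv ⟨(w : H), hzHm⟩, hzD⟩)
          = V ⟨Vinv ⟨(w : H), hzHm⟩, hVinv _⟩ := congrArg V (Subtype.ext rfl)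
      rw [h5, hVright ⟨(w : H), hzHm⟩ (hVinv _)]
    · rintro ⟨d, hd⟩
      set x : ↥Hp := Submodule.inclusion hD d with hx_def
      have hVxHm : V x ∈ Hm := hV x
      have hVinvVx : Vinv ⟨V x, hVxHm⟩ = (x : H) := hVleft x hVxHm
      have hwmem : V x ∈ (D.comap Vinv).map Hm.subtype := by
        rw [hdom_iff (V x) hVxHm, hVinvVx]
        exact d.2
      refine ⟨⟨V x, hwmem⟩, ?_⟩
      apply Subtype.ext
      have hz : ((⟨V x, hwmem⟩ : ↥((D.comap Vinv).map Hm.subtype)) : H) ∈ Hm := hVxHm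
      have hzD : Vinv ⟨_, hz⟩ ∈ D := hmemD _ hwmem hz
      rw [hT' ⟨V x, hwmem⟩ hz hzD, hd]
      congr 1
      congr 1
      apply Subtype.ext
      show Vinv ⟨V x, hz⟩ = (d : H)
      rw [hVinvVx]; rfl
  -- Q maps lam ⊔ mu exactly onto range T
  have hQlam : ∀ z ∈ lam, Q z ∈ LinearMap.range T := by
    intro z hz
    obtain ⟨d, hd1, hd2⟩ := (mem_lam' z).1 hz
    rw [hTrange]
    refine ⟨d, ?_⟩
    rw [hQval, hd2]
    have h6 : πp z = Submodule.inclusion hD d := by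
      apply Subtype.ext
      rw [Submodule.coe_inclusion]
      exact hd1
    rw [h6]
  have hQsup : ∀ z : H, z ∈ lam ⊔ mu ↔ Q z ∈ LinearMap.range T := by
    intro z
    constructor
    · intro hz
      obtain ⟨a, ha, b, hb, rfl⟩ := Submodule.mem_sup.1 hz
      rw [map_add, ((hQmu b).2 hb)]
      rw [add_zero]
      exact hQlam a ha
    · intro hz
      obtain ⟨d, hd⟩ := (hTrange (Q z)).1 hz
      set x : ↥Hp := πp z - Submodule.inclusion hD d with hx_def
      have h2 : (πm z : H) = ((Q z : ↥Hm) : H) + V (πp z) := by rw [hQval]; abel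
      have h3 : ((x : H)) = (πp z : H) - (d : H) := by
        rw [hx_def, Submodule.coe_sub, Submodule.coe_inclusion]
      have h4 : V x = V (πp z) - V (Submodule.inclusion hD d) := by
        rw [hx_def, map_sub]
      have hzsplit : z = ((d : H) + U d) + ((x : H) + V x) := by
        conv_lhs => rw [← hrecon z]
        rw [h2, hd, h3, h4]
        abel
      rw [hzsplit]
      apply Submodule.add_mem_sup
      · rw [mem_lam]; exact ⟨d, rfl⟩
      · rw [mem_mu]; exact ⟨x, rfl⟩
  -- the quotient equivalence
  set F : H →ₗ[ℂ] (↥Hm ⧸ LinearMap.range T) := (LinearMap.range T).mkQ ∘ₗ Q with hF_def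
  have hFsurj : Function.Surjective F := by
    intro q
    obtain ⟨y, rfl⟩ := Submodule.Quotient.mk_surjective _ q
    exact ⟨(y : H), by rw [hF_def]; simp [hQHm y]⟩
  have hFker : LinearMap.ker F = lam ⊔ mu := by
    ext z
    rw [LinearMap.mem_ker, hF_def, LinearMap.comp_apply, hQsup z, Submodule.mkQ_apply,
      Submodule.Quotient.mk_eq_zero]
  have e2 : (H ⧸ (lam ⊔ mu)) ≃ₗ[ℂ] (↥Hm ⧸ LinearMap.range T) :=
    (Submodule.quotEquivOfEq _ _ hFker.symm).trans (F.quotKerEquivOfSurjective hFsurj)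
  -- mu is closed
  have hmu_closed : IsClosed (mu : Set H) := by
    have : (mu : Set H) = (fun z : H => Q z) ⁻¹' {0} := by
      ext z
      simp only [Set.mem_preimage, Set.mem_singleton_iff, SetLike.mem_coe]
      exact (hQmu z).symm
    rw [this]
    exact IsClosed.preimage hQcont isClosed_singleton
  -- sup closedness correspondence
  have hrangeSup : ∀ y : ↥Hm, y ∈ LinearMap.range T ↔ (y : H) ∈ lam ⊔ mu := by
    intro y
    rw [hQsup, hQHm]
  have hsup_iff : IsClosed ((lam ⊔ mu : Submodule ℂ H) : Set H) ↔
      IsClosed ((LinearMap.range T : Submodule ℂ ↥Hm) : Set ↥Hm) := by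
    constructor
    · intro h
      have : ((LinearMap.range T : Submodule ℂ ↥Hm) : Set ↥Hm)
          = Subtype.val ⁻¹' ((lam ⊔ mu : Submodule ℂ H) : Set H) := by
        ext y
        simp only [Set.mem_preimage, SetLike.mem_coe]
        exact hrangeSup y
      rw [this]
      exact IsClosed.preimage continuous_subtype_val h
    · intro h
      have : ((lam ⊔ mu : Submodule ℂ H) : Set H) = (fun z : H => Q z) ⁻¹'
          ((LinearMap.range T : Submodule ℂ ↥Hm) : Set ↥Hm) := by
        ext z
        simp only [Set.mem_preimage, SetLike.mem_coe]
        exact hQsup z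
      rw [this]
      exact IsClosed.preimage hQcont h

  -- helper: projections on members
  have hπm_mem : ∀ (z : H) (hz : z ∈ Hm), πm z = ⟨z, hz⟩ := by
    intro z hz
    rw [hπm_def]
    exact Submodule.linearProjOfIsCompl_apply_left hcompl.symm ⟨z, hz⟩
  have hπp_mem : ∀ (z : H) (hz : z ∈ Hp), πp z = ⟨z, hz⟩ := by
    intro z hz
    rw [hπp_def]
    exact Submodule.linearProjOfIsCompl_apply_left hcompl ⟨z, hz⟩
  -- the graph of T as a subset of H × H
  set G : Set (H × H) := {p : H × H | ∃ y : ↥((D.comap Vinv).map Hm.subtype),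
      p.1 = (y : H) ∧ p.2 = ((T y : ↥Hm) : H)} with hG_def
  -- lam closed iff G closed
  set φ : H × H → H := fun p => Vinv (πm p.1) + ((πm p.1 : H) + (πm p.2 : H)) with hφ_def
  have hφcont : Continuous φ := by
    rw [hφ_def, ← hπmc_coe]
    exact (hVinvcont.comp (πmc.continuous.comp continuous_fst)).add
      (((continuous_subtype_val.comp (πmc.continuous.comp continuous_fst))).add
        (continuous_subtype_val.comp (πmc.continuous.comp continuous_snd)))
  have hGeq : G = φ ⁻¹' (lam : Set H) ∩ ((Hm : Set H) ×ˢ (Hm : Set H)) := by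
    ext p
    constructor
    · rintro ⟨y, hy1, hy2⟩
      have h1 : p.1 ∈ Hm := by rw [hy1]; exact hmemHm _ y.2
      have h2 : p.2 ∈ Hm := by rw [hy2]; exact (T y).2
      refine ⟨?_, h1, h2⟩
      show φ p ∈ (lam : Set H)
      rw [SetLike.mem_coe, hφ_def]
      simp only
      have hz : (y : H) ∈ Hm := hmemHm _ y.2
      have hzD : Vinv ⟨(y : H), hz⟩ ∈ D := hmemD _ y.2 hz
      have hπ1 : πm p.1 = ⟨(y : H), hz⟩ := by rw [hy1]; exact hπm_mem _ hz
      have hπ2 : πm p.2 = T y := by rw [hy2]; exact hπm_mem _ (T y).2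
      rw [hπ1, hπ2, mem_lam]
      refine ⟨⟨Vinv ⟨(y : H), hz⟩, hzD⟩, ?_⟩
      rw [hT' y hz hzD]
      show Vinv ⟨(y : H), hz⟩ + ((y : H) + (U ⟨Vinv ⟨(y : H), hz⟩, hzD⟩ - (y : H)))
        = Vinv ⟨(y : H), hz⟩ + U ⟨Vinv ⟨(y : H), hz⟩, hzD⟩
      abel
    · rintro ⟨hφp0, h1, h2⟩
      have hφp : φ p ∈ lam := hφp0
      have hφval : φ p = (↑(⟨Vinv ⟨p.1, h1⟩, hVinv _⟩ : ↥Hp) : H)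
          + ((⟨p.1, h1⟩ : ↥Hm) + (⟨p.2, h2⟩ : ↥Hm) : ↥Hm) := by
        rw [hφ_def]
        simp only
        rw [hπm_mem p.1 h1, hπm_mem p.2 h2]
        rfl
      rw [hφval, mem_lam'] at hφp
      obtain ⟨d, hd1, hd2⟩ := hφp
      rw [(hπ_add _ _).1] at hd1
      rw [(hπ_add _ _).2] at hd2
      -- hd1 : Vinv ⟨p.1, h1⟩ = ↑d, hd2 : p.1 + p.2 = U d
      have hd1' : Vinv ⟨p.1, h1⟩ = (d : H) := hd1
      have hd2' : p.1 + p.2 = U d := hd2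
      have hmem : p.1 ∈ (D.comap Vinv).map Hm.subtype := by
        rw [hdom_iff p.1 h1, hd1']
        exact d.2
      refine ⟨⟨p.1, hmem⟩, rfl, ?_⟩
      have hz : ((⟨p.1, hmem⟩ : ↥((D.comap Vinv).map Hm.subtype)) : H) ∈ Hm := h1
      have hzD : Vinv ⟨p.1, hz⟩ ∈ D := hmemD _ hmem hz
      rw [hT' ⟨p.1, hmem⟩ hz hzD]
      have hUeq : U ⟨Vinv ⟨p.1, hz⟩, hzD⟩ = U d := by
        congr 1
        apply Subtype.ext
        show Vinv ⟨p.1, hz⟩ = (d : H)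
        rw [← hd1']
      rw [hUeq]
      show p.2 = U d - p.1
      rw [← hd2']
      abel
  -- the map from H to the graph side
  set ψ : H → H × H := fun z => ((V (πp z) : H), (πm z : H) - V (πp z)) with hψ_def
  have hψcont : Continuous ψ := by
    rw [hψ_def, ← hπmc_coe, ← hπpc_coe]
    exact (hVcont.comp πpc.continuous).prodMk
      ((continuous_subtype_val.comp πmc.continuous).sub (hVcont.comp πpc.continuous))
  have hlamG : (lam : Set H) = ψ ⁻¹' G := by
    ext z
    rw [Set.mem_preimage, SetLike.mem_coe]
    constructor
    · intro hz
      obtain ⟨d, hd1, hd2⟩ := (mem_lam' z).1 hz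
      have hVHm : V (πp z) ∈ Hm := hV _
      have hVinvV : Vinv ⟨V (πp z), hVHm⟩ = (πp z : H) := hVleft _ hVHm
      have hmem : V (πp z) ∈ (D.comap Vinv).map Hm.subtype := by
        rw [hdom_iff _ hVHm, hVinvV, hd1]
        exact d.2
      rw [hG_def]
      refine ⟨⟨V (πp z), hmem⟩, rfl, ?_⟩
      have hz' : ((⟨V (πp z), hmem⟩ : ↥((D.comap Vinv).map Hm.subtype)) : H) ∈ Hm := hVHm
      have hzD : Vinv ⟨V (πp z), hz'⟩ ∈ D := hmemD _ hmem hz'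
      rw [hT' ⟨V (πp z), hmem⟩ hz' hzD]
      have hUeq : U ⟨Vinv ⟨V (πp z), hz'⟩, hzD⟩ = U d := by
        congr 1
        apply Subtype.ext
        show Vinv ⟨V (πp z), hz'⟩ = (d : H)
        rw [hVinvV, hd1]
      rw [hUeq]
      show (πm z : H) - V (πp z) = U d - V (πp z)
      rw [hd2]
    · intro hz
      rw [hG_def] at hz
      obtain ⟨y, hy1, hy2⟩ := hz
      simp only [hψ_def] at hy1 hy2
      have hz' : (y : H) ∈ Hm := hmemHm _ y.2
      have hzD : Vinv ⟨(y : H), hz'⟩ ∈ D := hmemD _ y.2 hz'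
      have hVinvy : Vinv ⟨(y : H), hz'⟩ = (πp z : H) := by
        have he : (⟨(y : H), hz'⟩ : ↥Hm) = ⟨V (πp z), hV _⟩ := Subtype.ext hy1.symm
        rw [he, hVleft _ (hV _)]
      have hpD : (πp z : H) ∈ D := by rw [← hVinvy]; exact hzD
      rw [mem_lam']
      refine ⟨⟨(πp z : H), hpD⟩, rfl, ?_⟩
      have hTy := hT' y hz' hzD
      have hUeq : U ⟨Vinv ⟨(y : H), hz'⟩, hzD⟩ = U ⟨(πp z : H), hpD⟩ := by
        congr 1
        exact Subtype.ext hVinvy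
      rw [hUeq] at hTy
      rw [hTy, ← hy1] at hy2
      -- hy2 : πm z - V (πp z) = U ⟨πp z, hpD⟩ - ↑y ... with ↑y = V (πp z)
      have : (πm z : H) - V (πp z) = U ⟨(πp z : H), hpD⟩ - V (πp z) := by
        rw [hy2, hy1]
      have h7 := congrArg (fun t => t + V (πp z)) this
      simpa using h7
  have hlam_iff : IsClosed (lam : Set H) ↔ IsClosed G := by
    constructor
    · intro h
      rw [hGeq]
      exact (IsClosed.preimage hφcont h).inter (hHm_closed.prod hHm_closed)
    · intro h
      rw [hlamG]
      exact IsClosed.preimage hψcont h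

  -- assemble the final statement
  refine ⟨?_, ?_, ⟨e1⟩⟩
  · unfold FredholmPair
    constructor
    · rintro ⟨hfin, hlamcl, _hmucl, hsupcl, hquot⟩
      refine ⟨hlam_iff.1 hlamcl, ?_, hsup_iff.1 hsupcl, ?_⟩
      · haveI := hfin
        exact e1.symm.finiteDimensional
      · haveI := hquot
        exact e2.finiteDimensional
    · rintro ⟨hG, hker, hrange, hcoker⟩
      refine ⟨?_, hlam_iff.2 hG, hmu_closed, hsup_iff.2 hrange, ?_⟩
      · haveI := hker
        exact e1.finiteDimensional
      · haveI := hcoker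
        exact e2.symm.finiteDimensional
  · intro _h
    unfold indexPair
    rw [← e1.finrank_eq, e2.finrank_eq]
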